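/- Let (Ω, Σ, μ) be a finite measure space, E a separable Banach space, m : Σ → E a μ-continuous vector measure with convex range m(Σ), and ≿ a preference relation on Σ with continuous vector representation via m satisfying the convexity axiom: for every A ∈ Σ, the set m({B ∈ Σ : B ≿ A}) is convex. Then there exists a continuous quasiconcave function φ : m(Σ) → ℝ with φ(0) = 0 such that for all A, B ∈ Σ: A ≿ B if and only if φ(m(A)) ≥ φ(m(B)). -/

import Mathlib

open MeasureTheory Filter

/-- The σ-algebra `Σ`, viewed as the type of measurable subsets of `Ω`. -/
abbrev MSet (Ω : Type*) [MeasurableSpace Ω] := {A : Set Ω // MeasurableSet A}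

open Topology

attribute [-instance] Quotient.instLE_mathlib Quotient.instPreorder



/-- Embedding a countable, order-dense (total pre)order on `ℕ` into `[0,1] ⊆ ℝ`,
hitting every rational in `(0,1)`.  `p n m` means `n ≤ m`. -/
theorem exists_embedding_nat (p : ℕ → ℕ → Prop)
    (hrefl : ∀ n, p n n)
    (htrans : ∀ a b c, p a b → p b c → p a c)
    (htotal : ∀ a b, p a b ∨ p b a)
    (hdense : ∀ n m, ¬ p m n → ∃ k, ¬ p k n ∧ ¬ p m k)
    (h2 : ∃ n m, ¬ p m n) :
    ∃ r : ℕ → ℝ,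
      (∀ n m, p n m → r n ≤ r m) ∧
      (∀ n m, ¬ p m n → r n < r m) ∧
      (∀ n, r n ∈ Set.Icc (0:ℝ) 1) ∧
      (∀ q : ℚ, 0 < q → q < 1 → ∃ n, r n = (q : ℝ)) ∧
      (∀ n, 0 < r n → ∃ k, ¬ p n k) := by
  classical
  -- strict version
  have hstrict : ∀ {n m}, ¬ p m n → p n m := fun {n m} h => (htotal n m).resolve_right fun h' => h h'
  let st : Setoid ℕ :=
    ⟨fun n m => p n m ∧ p m n,
     ⟨fun n => ⟨hrefl n, hrefl n⟩, fun h => ⟨h.2, h.1⟩,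
      fun h1 h2 => ⟨htrans _ _ _ h1.1 h2.1, htrans _ _ _ h2.2 h1.2⟩⟩⟩
  letI lo : LinearOrder (Quotient st) :=
    { le := Quotient.lift₂ p (by
        intro a b c d hac hbd
        exact propext ⟨fun h => htrans _ _ _ hac.2 (htrans _ _ _ h hbd.1),
          fun h => htrans _ _ _ hac.1 (htrans _ _ _ h hbd.2)⟩)
      le_refl := by rintro ⟨a⟩; exact hrefl a
      le_trans := by rintro ⟨a⟩ ⟨b⟩ ⟨c⟩ h1 h2; exact htrans _ _ _ h1 h2
      le_antisymm := by rintro ⟨a⟩ ⟨b⟩ h1 h2; exact Quotient.sound ⟨h1, h2⟩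
      le_total := by rintro ⟨a⟩ ⟨b⟩; exact htotal a b
      lt := Quotient.lift₂ (fun n m => ¬ p m n) (by
        intro a b c d hac hbd
        exact propext ⟨fun h h' => h (htrans _ _ _ hbd.1 (htrans _ _ _ h' hac.2)),
          fun h h' => h (htrans _ _ _ hbd.2 (htrans _ _ _ h' hac.1))⟩)
      lt_iff_le_not_ge := by rintro ⟨a⟩ ⟨b⟩; exact ⟨fun h => ⟨hstrict h, h⟩, fun h => h.2⟩
      toDecidableLE := fun _ _ => Classical.dec _ }
  -- basic translations
  have hmk_le : ∀ {n m : ℕ}, (⟦n⟧ : Quotient st) ≤ ⟦m⟧ ↔ p n m := fun {n m} => Iff.rfl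
  have hmk_lt : ∀ {n m : ℕ}, (⟦n⟧ : Quotient st) < ⟦m⟧ ↔ ¬ p m n := by
    intro n m
    rw [lt_iff_le_not_ge]
    constructor
    · exact fun h => h.2
    · exact fun h => ⟨hstrict h, h⟩
  have qdense : ∀ c1 c2 : Quotient st, c1 < c2 → ∃ c, c1 < c ∧ c < c2 := by
    rintro ⟨n⟩ ⟨m⟩ h
    obtain ⟨k, hk1, hk2⟩ := hdense n m (hmk_lt.mp h)
    exact ⟨⟦k⟧, hmk_lt.mpr hk1, hmk_lt.mpr hk2⟩
  -- the "interior" of the quotient order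
  let QQ := {c : Quotient st // (∃ c', c' < c) ∧ (∃ c', c < c')}
  haveI : Countable (Quotient st) := Quotient.countable
  haveI : Nonempty QQ := by
    obtain ⟨n, m, h⟩ := h2
    obtain ⟨c, hc1, hc2⟩ := qdense _ _ (hmk_lt.mpr h)
    exact ⟨⟨c, ⟨_, hc1⟩, ⟨_, hc2⟩⟩⟩
  haveI : DenselyOrdered QQ := by
    constructor
    rintro ⟨a, ha⟩ ⟨b, hb⟩ hab
    obtain ⟨c, hc1, hc2⟩ := qdense a b hab
    exact ⟨⟨c, ⟨_, hc1⟩, ⟨_, hc2⟩⟩, hc1, hc2⟩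
  haveI : NoMinOrder QQ := by
    constructor
    rintro ⟨a, ⟨a', ha'⟩, hup⟩
    obtain ⟨c, hc1, hc2⟩ := qdense a' a ha'
    exact ⟨⟨c, ⟨_, hc1⟩, ⟨_, hc2⟩⟩, hc2⟩
  haveI : NoMaxOrder QQ := by
    constructor
    rintro ⟨a, hdown, ⟨a', ha'⟩⟩
    obtain ⟨c, hc1, hc2⟩ := qdense a a' ha'
    exact ⟨⟨c, ⟨_, hc1⟩, ⟨_, hc2⟩⟩, hc1⟩
  -- target: rationals in (0,1)
  let B := {q : ℚ // 0 < q ∧ q < 1}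
  haveI : Nonempty B := ⟨⟨1/2, by norm_num⟩⟩
  haveI : DenselyOrdered B := by
    constructor
    rintro ⟨a, ha⟩ ⟨b, hb⟩ hab
    have hab' : a < b := hab
    refine ⟨⟨(a+b)/2, ?_, ?_⟩, ?_, ?_⟩
    · linarith [ha.1, hb.1]
    · linarith [ha.2, hb.2]
    · show a < (a+b)/2; linarith
    · show (a+b)/2 < b; linarith
  haveI : NoMinOrder B := by
    constructor
    rintro ⟨a, ha⟩
    refine ⟨⟨a/2, by linarith [ha.1], by linarith [ha.1, ha.2]⟩, ?_⟩
    show a/2 < a; linarith [ha.1]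
  haveI : NoMaxOrder B := by
    constructor
    rintro ⟨a, ha⟩
    refine ⟨⟨(a+1)/2, by linarith [ha.1], by linarith [ha.2]⟩, ?_⟩
    show a < (a+1)/2; linarith [ha.2]
  obtain ⟨g⟩ := Order.iso_of_countable_dense QQ B
  -- the real-valued map on the quotient
  let r' : Quotient st → ℝ := fun c =>
    if h1 : ∃ c', c' < c then
      (if h2 : ∃ c', c < c' then ((g ⟨c, h1, h2⟩ : B) : ℚ) else 1)
    else 0
  have hg01 : ∀ x : QQ, (0:ℝ) < ((g x : B) : ℚ) ∧ (((g x : B) : ℚ) : ℝ) < 1 := by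
    intro x
    rcases (g x).2 with ⟨h1, h2⟩
    constructor
    · exact_mod_cast h1
    · exact_mod_cast h2
  have hr'mem : ∀ c, r' c ∈ Set.Icc (0:ℝ) 1 := by
    intro c
    simp only [r']
    split_ifs with h1 h2
    · exact ⟨(hg01 ⟨c, h1, h2⟩).1.le, (hg01 ⟨c, h1, h2⟩).2.le⟩
    · exact ⟨zero_le_one, le_refl 1⟩
    · exact ⟨le_refl 0, zero_le_one⟩
  have hr'strict : ∀ c c' : Quotient st, c < c' → r' c < r' c' := by
    intro c c' hcc
    have hc'low : ∃ x, x < c' := ⟨c, hcc⟩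
    have hcup : ∃ x, c < x := ⟨c', hcc⟩
    simp only [r']
    by_cases h1 : ∃ x, x < c
    · rw [dif_pos h1, dif_pos hcup, dif_pos hc'low]
      by_cases h2 : ∃ x, c' < x
      · rw [dif_pos h2]
        have : (⟨c, h1, hcup⟩ : QQ) < ⟨c', hc'low, h2⟩ := hcc
        have h3 := g.strictMono this
        have h4 : ((g ⟨c, h1, hcup⟩ : B) : ℚ) < ((g ⟨c', hc'low, h2⟩ : B) : ℚ) := h3
        exact_mod_cast h4
      · rw [dif_neg h2]
        exact (hg01 ⟨c, h1, hcup⟩).2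
    · rw [dif_neg h1, dif_pos hc'low]
      by_cases h2 : ∃ x, c' < x
      · rw [dif_pos h2]
        exact (hg01 ⟨c', hc'low, h2⟩).1
      · rw [dif_neg h2]; exact zero_lt_one
  have hr'mono : ∀ c c' : Quotient st, c ≤ c' → r' c ≤ r' c' := by
    intro c c' hcc
    rcases lt_or_eq_of_le hcc with h | h
    · exact (hr'strict _ _ h).le
    · rw [h]
  refine ⟨fun n => r' ⟦n⟧, ?_, ?_, ?_, ?_, ?_⟩
  · intro n m h; exact hr'mono _ _ (hmk_le.mpr h)
  · intro n m h; exact hr'strict _ _ (hmk_lt.mpr h)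
  · intro n; exact hr'mem _
  · intro q hq0 hq1
    obtain ⟨x⟩ : Nonempty QQ := inferInstance
    set y : QQ := g.symm ⟨q, hq0, hq1⟩ with hy
    obtain ⟨n, hn⟩ := Quotient.exists_rep y.1
    refine ⟨n, ?_⟩
    have h1 : ∃ c', c' < (⟦n⟧ : Quotient st) := by rw [hn]; exact y.2.1
    have h2 : ∃ c', (⟦n⟧ : Quotient st) < c' := by rw [hn]; exact y.2.2
    simp only [r']
    rw [dif_pos h1, dif_pos h2]
    have : (⟨⟦n⟧, h1, h2⟩ : QQ) = y := Subtype.ext hn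
    rw [this, hy, g.apply_symm_apply]
  · intro n hn
    by_contra hcon
    push_neg at hcon
    have h1 : ¬ ∃ c', c' < (⟦n⟧ : Quotient st) := by
      rintro ⟨c', hc'⟩
      induction c' using Quotient.ind with
      | _ k => exact (hmk_lt.mp hc') (hcon k)
    simp only [r', dif_neg h1] at hn
    exact lt_irrefl _ hn


section AbstractRep

variable {E ι : Type*} [NormedAddCommGroup E] [NormedSpace ℝ E]

/-- closure lemma for upper contour sets -/
theorem rep_closU (v : ι → E) (pref : ι → ι → Prop)
    (hcont₁ : ∀ A B (Ak : ℕ → ι), (∀ k, pref (Ak k) B) →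
      Tendsto (fun k => v (Ak k)) atTop (nhds (v A)) → pref A B)
    (A : ι) :
    {x | ∃ C : ι, x = v C} ∩ closure {x | ∃ B, pref B A ∧ x = v B} ⊆
      {x | ∃ B, pref B A ∧ x = v B} := by
  rintro x ⟨⟨C, rfl⟩, hx⟩
  rw [mem_closure_iff_seq_limit] at hx
  obtain ⟨y, hy, hylim⟩ := hx
  choose Bk hBk1 hBk2 using hy
  have h1 : (fun k => v (Bk k)) = y := funext fun k => (hBk2 k).symm
  exact ⟨C, hcont₁ C A Bk hBk1 (by rw [h1]; exact hylim), rfl⟩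

/-- closure lemma for lower contour sets -/
theorem rep_closL (v : ι → E) (pref : ι → ι → Prop)
    (hcont₂ : ∀ A B (Bk : ℕ → ι), (∀ k, pref A (Bk k)) →
      Tendsto (fun k => v (Bk k)) atTop (nhds (v B)) → pref A B)
    (A : ι) :
    {x | ∃ C : ι, x = v C} ∩ closure {x | ∃ B, pref A B ∧ x = v B} ⊆
      {x | ∃ B, pref A B ∧ x = v B} := by
  rintro x ⟨⟨C, rfl⟩, hx⟩
  rw [mem_closure_iff_seq_limit] at hx
  obtain ⟨y, hy, hylim⟩ := hx
  choose Bk hBk1 hBk2 using hy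
  have h1 : (fun k => v (Bk k)) = y := funext fun k => (hBk2 k).symm
  exact ⟨C, hcont₂ A C Bk hBk1 (by rw [h1]; exact hylim), rfl⟩

end AbstractRep

section AbstractRep2

set_option linter.unusedSectionVars false

variable {E ι : Type*} [NormedAddCommGroup E] [NormedSpace ℝ E]

/-- strict betweenness from connectedness of the range -/
theorem rep_between (v : ι → E) (pref : ι → ι → Prop)
    (hrange : Convex ℝ {x | ∃ A : ι, x = v A})
    (hcomplete : ∀ A B, pref A B ∨ pref B A)
    (htrans : ∀ A B C, pref A B → pref B C → pref A C)
    (hcong : ∀ A B, v A = v B → pref A B ∧ pref B A)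
    (hcont₁ : ∀ A B (Ak : ℕ → ι), (∀ k, pref (Ak k) B) →
      Tendsto (fun k => v (Ak k)) atTop (nhds (v A)) → pref A B)
    (hcont₂ : ∀ A B (Bk : ℕ → ι), (∀ k, pref A (Bk k)) →
      Tendsto (fun k => v (Bk k)) atTop (nhds (v B)) → pref A B)
    {A B : ι} (hAB : ¬ pref B A) :
    ∃ x, x ∈ {x | ∃ C : ι, x = v C} ∧
      x ∈ (closure {x | ∃ C, pref C A ∧ x = v C})ᶜ ∧
      x ∈ (closure {x | ∃ C, pref B C ∧ x = v C})ᶜ := by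
  have hcongr : ∀ {X Y C : ι}, v X = v Y → pref X C → pref Y C := fun {X Y C} he h =>
    htrans _ _ _ (hcong X Y he).2 h
  have hconn : IsPreconnected {x | ∃ A : ι, x = v A} := hrange.isPreconnected
  have hcov : {x | ∃ A : ι, x = v A} ⊆
      (closure {x | ∃ C, pref C A ∧ x = v C})ᶜ ∪ (closure {x | ∃ C, pref B C ∧ x = v C})ᶜ := by
    intro x hx
    rw [Set.mem_union]
    by_contra h
    push_neg at h
    simp only [Set.mem_compl_iff, not_not] at h
    obtain ⟨B', hB'A, hxB'⟩ := rep_closU v pref hcont₁ A ⟨hx, h.1⟩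
    obtain ⟨C', hBC', hxC'⟩ := rep_closL v pref hcont₂ B ⟨hx, h.2⟩
    exact hAB (htrans _ _ _ hBC' (hcongr (hxB'.symm.trans hxC') hB'A))
  have hne1 : ({x | ∃ A : ι, x = v A} ∩ (closure {x | ∃ C, pref C A ∧ x = v C})ᶜ).Nonempty := by
    refine ⟨v B, ⟨B, rfl⟩, fun hc => hAB ?_⟩
    obtain ⟨B', h1, h2⟩ := rep_closU v pref hcont₁ A ⟨⟨B, rfl⟩, hc⟩
    exact hcongr h2.symm h1
  have hne2 : ({x | ∃ A : ι, x = v A} ∩ (closure {x | ∃ C, pref B C ∧ x = v C})ᶜ).Nonempty := by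
    refine ⟨v A, ⟨A, rfl⟩, fun hc => hAB ?_⟩
    obtain ⟨C', h1, h2⟩ := rep_closL v pref hcont₂ B ⟨⟨A, rfl⟩, hc⟩
    exact htrans _ _ _ h1 (hcong _ _ h2.symm).1
  obtain ⟨x, hxS, hx1, hx2⟩ := hconn _ _ isClosed_closure.isOpen_compl
    isClosed_closure.isOpen_compl hcov hne1 hne2
  exact ⟨x, hxS, hx1, hx2⟩

end AbstractRep2
theorem abstract_rep {E ι : Type*} [NormedAddCommGroup E] [NormedSpace ℝ E]
    [TopologicalSpace.SeparableSpace E] [Nonempty ι]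
    (v : ι → E) (pref : ι → ι → Prop)
    (hrange : Convex ℝ {x | ∃ A : ι, x = v A})
    (hcomplete : ∀ A B, pref A B ∨ pref B A)
    (htrans : ∀ A B C, pref A B → pref B C → pref A C)
    (hcong : ∀ A B, v A = v B → pref A B ∧ pref B A)
    (hcont₁ : ∀ A B (Ak : ℕ → ι), (∀ k, pref (Ak k) B) →
      Tendsto (fun k => v (Ak k)) atTop (nhds (v A)) → pref A B)
    (hcont₂ : ∀ A B (Bk : ℕ → ι), (∀ k, pref A (Bk k)) →
      Tendsto (fun k => v (Bk k)) atTop (nhds (v B)) → pref A B)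
    (hconv : ∀ A, Convex ℝ {x | ∃ B, pref B A ∧ x = v B}) :
    ∃ φ : E → ℝ, ContinuousOn φ {x | ∃ A : ι, x = v A} ∧
      QuasiconcaveOn ℝ {x | ∃ A : ι, x = v A} φ ∧ φ 0 = 0 ∧
      ∀ A B, (pref A B ↔ φ (v B) ≤ φ (v A)) := by
  classical
  have hrefl : ∀ A, pref A A := fun A => (hcong A A rfl).1
  have hstrict : ∀ {A B}, ¬ pref B A → pref A B := fun {A B} h =>
    (hcomplete A B).resolve_right fun h' => h h'
  have hcongr : ∀ {X Y C : ι}, v X = v Y → pref X C → pref Y C := fun {X Y C} he h =>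
    htrans _ _ _ (hcong X Y he).2 h
  have hcongl : ∀ {X Y C : ι}, v X = v Y → pref C X → pref C Y := fun {X Y C} he h =>
    htrans _ _ _ h (hcong X Y he).1
  have hconn : IsPreconnected {x | ∃ A : ι, x = v A} := hrange.isPreconnected
  -- a dense sequence in the range
  haveI : SecondCountableTopology E := UniformSpace.secondCountable_of_separable E
  haveI hne : Nonempty {x : E | ∃ A : ι, x = v A} :=
    ⟨⟨v (Classical.arbitrary ι), ⟨_, rfl⟩⟩⟩
  obtain ⟨u, hu⟩ := TopologicalSpace.exists_dense_seq {x : E | ∃ A : ι, x = v A}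
  choose d hd using fun n => (u n).2
  have hdense : ∀ W : Set E, IsOpen W → ∀ x, (∃ A : ι, x = v A) → x ∈ W →
      ∃ n, v (d n) ∈ W := by
    intro W hW x hxS hxW
    have hnonempty : ((Subtype.val : {x : E | ∃ A : ι, x = v A} → E) ⁻¹' W).Nonempty :=
      ⟨⟨x, hxS⟩, hxW⟩
    have hop : IsOpen ((Subtype.val : {x : E | ∃ A : ι, x = v A} → E) ⁻¹' W) :=
      hW.preimage continuous_subtype_val
    obtain ⟨n, hn⟩ := hu.exists_mem_open hop hnonempty
    exact ⟨n, (hd n) ▸ hn⟩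
  -- strict betweenness with a witness from the dense sequence
  have hdbet : ∀ A B : ι, ¬ pref B A → ∃ n, ¬ pref (d n) A ∧ ¬ pref B (d n) := by
    intro A B hAB
    obtain ⟨x, hxS, hx1, hx2⟩ :=
      rep_between v pref hrange hcomplete htrans hcong hcont₁ hcont₂ hAB
    obtain ⟨n, hn⟩ := hdense _ (IsOpen.inter isClosed_closure.isOpen_compl
      isClosed_closure.isOpen_compl) x hxS ⟨hx1, hx2⟩
    refine ⟨n, ?_, ?_⟩
    · exact fun h => hn.1 (subset_closure ⟨d n, h, rfl⟩)
    · exact fun h => hn.2 (subset_closure ⟨d n, h, rfl⟩)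
  -- trivial case : everything is indifferent
  by_cases hall : ∀ A B, pref A B
  · refine ⟨fun _ => 0, continuousOn_const, ?_, rfl, fun A B => ⟨fun _ => le_refl 0,
      fun _ => hall A B⟩⟩
    intro c
    by_cases hc : c ≤ (0:ℝ)
    · have h : {x ∈ {x : E | ∃ A : ι, x = v A} | c ≤ (0:ℝ)} = {x : E | ∃ A : ι, x = v A} := by
        ext x; simp [hc]
      rw [h]; exact hrange
    · have h : {x ∈ {x : E | ∃ A : ι, x = v A} | c ≤ (0:ℝ)} = ∅ := by
        ext x; simp [hc]
      rw [h]; exact convex_empty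
  -- main case
  push_neg at hall
  obtain ⟨A₀, B₀, hA₀B₀⟩ := hall
  -- the countable order on indices of the dense sequence
  obtain ⟨r, hrmono, hrstrict, hrmem, hrsurj, hrmin⟩ :=
    exists_embedding_nat (fun n k => pref (d k) (d n))
      (fun n => hrefl _)
      (fun a b c h1 h2 => htrans _ _ _ h2 h1)
      (fun a b => (hcomplete (d b) (d a)))
      (by
        intro n m hnm
        obtain ⟨k, hk1, hk2⟩ := hdbet (d m) (d n) hnm
        exact ⟨k, hk2, hk1⟩)
      (by
        obtain ⟨n1, hn1B, hn1A⟩ := hdbet B₀ A₀ hA₀B₀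
        obtain ⟨n2, hn2, hn2A⟩ := hdbet (d n1) A₀ hn1A
        exact ⟨n2, n1, hn2⟩)
  -- the utility function
  set φ : E → ℝ := fun x =>
    sSup (insert (0:ℝ) {t | ∃ n, r n = t ∧ ∃ A : ι, x = v A ∧ pref A (d n)}) with hφdef
  have hMbdd : ∀ x : E, BddAbove (insert (0:ℝ)
      {t | ∃ n, r n = t ∧ ∃ A : ι, x = v A ∧ pref A (d n)}) := by
    intro x
    refine ⟨1, ?_⟩
    intro t ht
    rcases Set.mem_insert_iff.mp ht with rfl | ⟨n, rfl, _⟩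
    · exact zero_le_one
    · exact (hrmem n).2
  have hMne : ∀ x : E, (insert (0:ℝ)
      {t | ∃ n, r n = t ∧ ∃ A : ι, x = v A ∧ pref A (d n)}).Nonempty :=
    fun x => ⟨0, Set.mem_insert 0 _⟩
  have hφ0le : ∀ x, 0 ≤ φ x := fun x => le_csSup (hMbdd x) (Set.mem_insert _ _)
  have hφler : ∀ (A : ι) (n : ℕ), pref A (d n) → r n ≤ φ (v A) := by
    intro A n h
    exact le_csSup (hMbdd _) (Set.mem_insert_iff.mpr (Or.inr ⟨n, rfl, A, rfl, h⟩))
  have hφube : ∀ (A : ι) (b : ℝ), 0 ≤ b → (∀ n, pref A (d n) → r n ≤ b) → φ (v A) ≤ b := by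
    intro A b hb hbn
    apply csSup_le (hMne _)
    intro t ht
    rcases Set.mem_insert_iff.mp ht with rfl | ⟨n, rfl, A', hA', hp⟩
    · exact hb
    · exact hbn n (hcongr hA'.symm hp)
  have hφmono : ∀ A B, pref A B → φ (v B) ≤ φ (v A) := by
    intro A B h
    exact hφube B _ (hφ0le _) (fun n hn => hφler A n (htrans _ _ _ h hn))
  have hφstrict : ∀ A B, ¬ pref A B → φ (v A) < φ (v B) := by
    intro A B h
    obtain ⟨n1, hn1B, hn1A⟩ := hdbet B A h
    obtain ⟨n2, hn2, hn2A⟩ := hdbet (d n1) A hn1A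
    have h1 : r n1 ≤ φ (v B) := hφler B n1 (hstrict hn1B)
    have h2 : r n2 < r n1 := hrstrict n2 n1 hn2
    have h3 : φ (v A) ≤ r n2 := by
      refine hφube A _ (hrmem n2).1 ?_
      intro k hk
      refine hrmono k n2 ?_
      by_contra hx
      exact hn2A (htrans _ _ _ hk (hstrict hx))
    linarith
  -- value density from above
  have hL1 : ∀ (A : ι), (∃ n, ¬ pref A (d n)) → ∀ ε : ℝ, 0 < ε →
      ∃ n, ¬ pref A (d n) ∧ r n < φ (v A) + ε := by
    rintro A ⟨n0, hn0⟩ ε hε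
    by_cases hbig : 1 < φ (v A) + ε
    · exact ⟨n0, hn0, lt_of_le_of_lt (hrmem n0).2 hbig⟩
    · push_neg at hbig
      have hs0 : 0 ≤ φ (v A) := hφ0le _
      obtain ⟨q, hq1, hq2⟩ := exists_rat_btwn (lt_add_of_pos_right (φ (v A)) hε)
      have hq0 : 0 < q := by exact_mod_cast lt_of_le_of_lt hs0 hq1
      have hq1' : q < 1 := by exact_mod_cast lt_of_lt_of_le hq2 hbig
      obtain ⟨n, hn⟩ := hrsurj q hq0 hq1'
      by_cases hc : pref A (d n)
      · exact absurd (hφler A n hc) (by rw [hn]; exact not_le.mpr hq1)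
      · exact ⟨n, hc, by rw [hn]; exact hq2⟩
  -- value density from below
  have hL2 : ∀ (A : ι), 0 < φ (v A) → ∀ ε : ℝ, 0 < ε →
      ∃ n, ¬ pref (d n) A ∧ φ (v A) - ε < r n := by
    intro A hpos ε hε
    by_cases hneg : φ (v A) - ε < 0
    · obtain ⟨t, ht, htpos⟩ := exists_lt_of_lt_csSup (hMne (v A)) hpos
      rcases Set.mem_insert_iff.mp ht with rfl | ⟨n1, rfl, A', hA', hp⟩
      · exact absurd htpos (lt_irrefl 0)
      · obtain ⟨k, hk⟩ := hrmin n1 htpos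
        refine ⟨k, ?_, lt_of_lt_of_le hneg (hrmem k).1⟩
        intro hcon
        exact hk (htrans _ _ _ hcon (hcongr hA'.symm hp))
    · push_neg at hneg
      by_contra hcon
      push_neg at hcon
      obtain ⟨t, ht, htgt⟩ := exists_lt_of_lt_csSup (hMne (v A))
        (show φ (v A) - ε < φ (v A) by linarith)
      rcases Set.mem_insert_iff.mp ht with rfl | ⟨n1, rfl, A', hA', hp⟩
      · exact absurd htgt (not_lt.mpr hneg)
      · have hpA : pref A (d n1) := hcongr hA'.symm hp
        have hsim : pref (d n1) A := by
          by_contra hx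
          exact absurd htgt (not_lt.mpr (hcon n1 hx))
        obtain ⟨q, hq1, hq2⟩ := exists_rat_btwn htgt
        have hq0 : 0 < q := by exact_mod_cast lt_of_le_of_lt hneg hq1
        have hql : q < 1 := by exact_mod_cast lt_of_lt_of_le hq2 (hrmem n1).2
        obtain ⟨n2, hn2⟩ := hrsurj q hq0 hql
        by_cases hc : pref (d n2) A
        · have h5 : pref (d n2) (d n1) := htrans _ _ _ hc hpA
          have hle := hrmono n1 n2 h5
          rw [hn2] at hle
          exact absurd hq2 (not_lt.mpr hle)
        · have h6 := hcon n2 hc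
          rw [hn2] at h6
          exact absurd hq1 (not_lt.mpr h6)
  -- continuity
  have hφcont : ContinuousOn φ {x | ∃ A : ι, x = v A} := by
    rintro x ⟨A, rfl⟩
    apply Metric.tendsto_nhds.mpr
    intro ε hε
    rw [eventually_iff, mem_nhdsWithin]
    obtain ⟨W1, hW1o, hxW1, hW1b⟩ : ∃ W : Set E, IsOpen W ∧ v A ∈ W ∧
        ∀ B : ι, v B ∈ W → φ (v B) < φ (v A) + ε := by
      by_cases hup : ∃ n, ¬ pref A (d n)
      · obtain ⟨n, hnA, hnr⟩ := hL1 A hup ε hε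
        refine ⟨(closure {x | ∃ B, pref B (d n) ∧ x = v B})ᶜ,
          isClosed_closure.isOpen_compl, ?_, ?_⟩
        · intro hc
          obtain ⟨B', h1, h2⟩ := rep_closU v pref hcont₁ (d n) ⟨⟨A, rfl⟩, hc⟩
          exact hnA (hcongr h2.symm h1)
        · intro B hB
          have hBn : ¬ pref B (d n) := fun hc => hB (subset_closure ⟨B, hc, rfl⟩)
          have hb : φ (v B) ≤ r n := by
            refine hφube B _ (hrmem n).1 ?_
            intro k hk
            refine hrmono k n ?_
            by_contra hx
            exact hBn (htrans _ _ _ hk (hstrict hx))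
          linarith
      · push_neg at hup
        refine ⟨Set.univ, isOpen_univ, trivial, ?_⟩
        intro B _
        have hb : φ (v B) ≤ φ (v A) := hφube B _ (hφ0le _) (fun k _ => hφler A k (hup k))
        linarith
    obtain ⟨W2, hW2o, hxW2, hW2b⟩ : ∃ W : Set E, IsOpen W ∧ v A ∈ W ∧
        ∀ B : ι, v B ∈ W → φ (v A) - ε < φ (v B) := by
      by_cases hpos : 0 < φ (v A)
      · obtain ⟨n, hnA, hnr⟩ := hL2 A hpos ε hε
        refine ⟨(closure {x | ∃ B, pref (d n) B ∧ x = v B})ᶜ,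
          isClosed_closure.isOpen_compl, ?_, ?_⟩
        · intro hc
          obtain ⟨C', h1, h2⟩ := rep_closL v pref hcont₂ (d n) ⟨⟨A, rfl⟩, hc⟩
          exact hnA (hcongl h2.symm h1)
        · intro B hB
          have hBn : pref B (d n) := by
            by_contra hx
            exact hB (subset_closure ⟨B, hstrict hx, rfl⟩)
          have hb := hφler B n hBn
          linarith
      · push_neg at hpos
        refine ⟨Set.univ, isOpen_univ, trivial, fun B _ => ?_⟩
        have hb := hφ0le (v B)
        linarith
    refine ⟨W1 ∩ W2, hW1o.inter hW2o, ⟨hxW1, hxW2⟩, ?_⟩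
    rintro z ⟨⟨hz1, hz2⟩, ⟨B, rfl⟩⟩
    rw [Set.mem_setOf_eq, Real.dist_eq, abs_lt]
    exact ⟨by linarith [hW2b B hz2], by linarith [hW1b B hz1]⟩
  -- convexity of superlevel sets
  have hconvlvl : ∀ c : ℝ, Convex ℝ {x ∈ {x : E | ∃ A : ι, x = v A} | c ≤ φ x} := by
    intro c
    rcases Set.eq_empty_or_nonempty {x ∈ {x : E | ∃ A : ι, x = v A} | c ≤ φ x} with he | hne'
    · rw [he]; exact convex_empty
    obtain ⟨x₀, hx₀S, hx₀⟩ := hne'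
    obtain ⟨A₁, rfl⟩ := hx₀S
    have hkey : {x ∈ {x : E | ∃ A : ι, x = v A} | c ≤ φ x} =
        {x : E | ∃ A : ι, x = v A} ∩
          ⋂ (A : ι) (_ : φ (v A) < c), {x | ∃ B, pref B A ∧ x = v B} := by
      ext z
      simp only [Set.mem_inter_iff, Set.mem_iInter, Set.mem_setOf_eq, Set.mem_sep_iff]
      constructor
      · rintro ⟨⟨B, rfl⟩, hz⟩
        refine ⟨⟨B, rfl⟩, ?_⟩
        intro A hA
        refine ⟨B, ?_, rfl⟩
        by_contra hx
        have := hφstrict B A hx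
        linarith
      · rintro ⟨⟨B, rfl⟩, hz⟩
        refine ⟨⟨B, rfl⟩, ?_⟩
        by_contra hx
        push_neg at hx
        have hIcc : Set.Icc (φ (v B)) (φ (v A₁)) ⊆ φ '' {x : E | ∃ A : ι, x = v A} :=
          hconn.intermediate_value ⟨B, rfl⟩ ⟨A₁, rfl⟩ hφcont
        have hv : (φ (v B) + c)/2 ∈ Set.Icc (φ (v B)) (φ (v A₁)) :=
          ⟨by linarith, by linarith⟩
        obtain ⟨y, hyS, hyv⟩ := hIcc hv
        obtain ⟨A₂, rfl⟩ := hyS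
        have h₂ : φ (v A₂) < c := by rw [hyv]; linarith
        obtain ⟨B', h1, h2⟩ := hz A₂ h₂
        have h3 : pref B A₂ := hcongr h2.symm h1
        have h4 := hφmono B A₂ h3
        rw [hyv] at h4
        linarith
    rw [hkey]
    exact hrange.inter (convex_iInter fun A => convex_iInter fun _ => hconv A)
  -- assemble
  refine ⟨fun x => φ x - φ 0, hφcont.sub continuousOn_const, ?_, by ring, ?_⟩
  · intro c
    have h : {x ∈ {x : E | ∃ A : ι, x = v A} | c ≤ φ x - φ 0} =
        {x ∈ {x : E | ∃ A : ι, x = v A} | c + φ 0 ≤ φ x} := by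
      ext z
      simp only [Set.mem_sep_iff]
      constructor
      · rintro ⟨h1, h2⟩; exact ⟨h1, by linarith⟩
      · rintro ⟨h1, h2⟩; exact ⟨h1, by linarith⟩
    rw [h]
    exact hconvlvl _
  · intro A B
    constructor
    · intro h
      have := hφmono A B h
      simp only
      linarith
    · intro h
      by_contra hx
      have := hφstrict A B hx
      simp only at h
      linarith

theorem stmt7 {Ω : Type*} [MeasurableSpace Ω] (μ : Measure Ω) [IsFiniteMeasure μ]
    {E : Type*} [NormedAddCommGroup E] [NormedSpace ℝ E]
    [TopologicalSpace.SeparableSpace E]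
    (m : VectorMeasure Ω E)
    (habs : ∀ N : Set Ω, μ N = 0 → ∀ A : Set Ω, MeasurableSet A → m (A ∩ N) = 0)
    -- the range `m(Σ)` is convex
    (hrange : Convex ℝ {x | ∃ A : MSet Ω, x = m A.1})
    -- `≿` is a preference relation on `Σ`: complete and transitive
    (pref : MSet Ω → MSet Ω → Prop)
    (hcomplete : ∀ A B, pref A B ∨ pref B A)
    (htrans : ∀ A B C, pref A B → pref B C → pref A C)
    -- vector representation: `m(A) = m(B)` implies `A ∼ B`
    (hcong : ∀ A B, m A.1 = m B.1 → pref A B ∧ pref B A)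
    -- continuity
    (hcont₁ : ∀ (A B : MSet Ω) (Ak : ℕ → MSet Ω), (∀ k, pref (Ak k) B) →
      Tendsto (fun k => m (Ak k).1) atTop (nhds (m A.1)) → pref A B)
    (hcont₂ : ∀ (A B : MSet Ω) (Bk : ℕ → MSet Ω), (∀ k, pref A (Bk k)) →
      Tendsto (fun k => m (Bk k).1) atTop (nhds (m B.1)) → pref A B)
    -- convexity axiom: `m({B : B ≿ A})` is convex for every `A`
    (hconv : ∀ A : MSet Ω, Convex ℝ {x | ∃ B : MSet Ω, pref B A ∧ x = m B.1}) :
    ∃ φ : E → ℝ, ContinuousOn φ {x | ∃ A : MSet Ω, x = m A.1} ∧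
      QuasiconcaveOn ℝ {x | ∃ A : MSet Ω, x = m A.1} φ ∧ φ 0 = 0 ∧
      ∀ A B : MSet Ω, (pref A B ↔ φ (m B.1) ≤ φ (m A.1)) := by
  haveI : Nonempty (MSet Ω) := ⟨⟨∅, MeasurableSet.empty⟩⟩
  exact abstract_rep (fun A : MSet Ω => m A.1) pref hrange hcomplete htrans hcong
    hcont₁ hcont₂ hconv
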